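/- Let X be a nonempty compact Hausdorff topological space and let ≽ be a reflexive and transitive relation on X whose graph {(x,y) : x ≽ y} is closed in X × X. Then X contains a maximal element: there exists x ∈ X such that for every y ∈ X, y ≽ x implies x ≽ y. -/
import Mathlib


/-- A closed reflexive transitive relation on a nonempty compact
Hausdorff space has a maximal element. -/
theorem closed_preorder_on_compact_has_maximal_element
    {X : Type*} [TopologicalSpace X] [CompactSpace X] [T2Space X] [Nonempty X]
    (r : X → X → Prop)
    (hrefl : ∀ x, r x x)
    (htrans : ∀ x y z, r x y → r y z → r x z)
    (hclosed : IsClosed {p : X × X | r p.1 p.2}) :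
    ∃ x : X, ∀ y : X, r y x → r x y := by
  -- order: a ≺ b iff r b a (b is ≽ a)
  have hS_closed : ∀ a : X, IsClosed {y : X | r y a} := by
    intro a
    have : {y : X | r y a} = (fun y => (y, a)) ⁻¹' {p : X × X | r p.1 p.2} := rfl
    rw [this]
    exact hclosed.preimage (Continuous.prodMk_left a)
  apply exists_maximal_of_nonempty_chains_bounded (r := fun a b => r b a)
  · intro c hc hne
    -- upper bound for a chain: intersection of closed sets {y | r y a}, a ∈ c
    haveI : Nonempty c := hne.to_subtype
    have key : (⋂ a : c, {y : X | r y a.1}).Nonempty := by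
      apply IsCompact.nonempty_iInter_of_directed_nonempty_isCompact_isClosed
      · rintro ⟨a, ha⟩ ⟨b, hb⟩
        rcases eq_or_ne a b with h | h
        · subst h; exact ⟨⟨a, ha⟩, subset_rfl, subset_rfl⟩
        · rcases hc ha hb h with h' | h'
          · exact ⟨⟨b, hb⟩, fun y hy => htrans y b a hy h', subset_rfl⟩
          · exact ⟨⟨a, ha⟩, subset_rfl, fun y hy => htrans y a b hy h'⟩
      · exact fun a => ⟨a.1, hrefl a.1⟩
      · exact fun a => (hS_closed a.1).isCompact
      · exact fun a => hS_closed a.1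
    obtain ⟨ub, hub⟩ := key
    exact ⟨ub, fun a ha => Set.mem_iInter.mp hub ⟨a, ha⟩⟩
  · exact fun {a b c} hab hbc => htrans c b a hbc hab
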